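/- Let X be a vector of n iid Pareto(α) random variables with α > 1 (finite mean). For θ, η ∈ ℝ₊ⁿ with θ ⪯ η in majorization order, η·X ≤_ssd θ·X, i.e., E[u(η·X)] ≤ E[u(θ·X)] for every increasing concave function u for which the expectations exist. -/

import Mathlib

open MeasureTheory ProbabilityTheory Real Finset

noncomputable section

variable {Ω : Type*} [MeasurableSpace Ω]

/-- `X ~ Pareto(α)` : cdf `1 - x^(-α)` for `x ≥ 1`. -/
def IsPareto (P : Measure Ω) (α : ℝ) (X : Ω → ℝ) : Prop :=
  Measurable X ∧ (∀ x : ℝ, 1 ≤ x → P {ω | x < X ω} = ENNReal.ofReal (x ^ (-α))) ∧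
    P {ω | X ω < 1} = 0

/-- the increasing rearrangement of a vector -/
def sortedVec {n : ℕ} (f : Fin n → ℝ) : Fin n → ℝ := f ∘ Tuple.sort f

/-- `MajorizedBy θ η` : `θ ⪯ η`, i.e. equal sums and the sum of the `k` smallest
components of `θ` is at least that of `η` for each `k`. -/
def MajorizedBy {n : ℕ} (θ η : Fin n → ℝ) : Prop :=
  (∑ i, θ i = ∑ i, η i) ∧
  ∀ k : ℕ, k ≤ n →
    ∑ i ∈ Finset.univ.filter (fun i : Fin n => (i : ℕ) < k), sortedVec η i ≤
    ∑ i ∈ Finset.univ.filter (fun i : Fin n => (i : ℕ) < k), sortedVec θ i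

namespace HLPAux


variable {n : ℕ}

def psum (f : Fin n → ℝ) (k : ℕ) : ℝ :=
  ∑ i ∈ Finset.univ.filter (fun i : Fin n => (i : ℕ) < k), f i

lemma filter_succ (m : Fin n) :
    (Finset.univ.filter fun i : Fin n => (i : ℕ) < (m : ℕ) + 1)
      = insert m (Finset.univ.filter fun i : Fin n => (i : ℕ) < (m : ℕ)) := by
  ext i
  simp only [mem_filter, mem_univ, true_and, mem_insert, Nat.lt_succ_iff_lt_or_eq]
  constructor
  · rintro (h | h)
    · exact Or.inr (by simpa using h)
    · exact Or.inl (Fin.ext h)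
  · rintro (rfl | h)
    · exact Or.inr rfl
    · exact Or.inl (by simpa using h)

lemma psum_succ (f : Fin n → ℝ) (m : Fin n) :
    psum f ((m : ℕ) + 1) = f m + psum f (m : ℕ) := by
  rw [psum, filter_succ, Finset.sum_insert (by simp)]
  rfl

lemma psum_univ (f : Fin n → ℝ) : psum f n = ∑ i, f i := by
  rw [psum, Finset.filter_true_of_mem (fun i _ => i.isLt)]

lemma hlp_sorted : ∀ (N : ℕ) (θ η : Fin n → ℝ),
    ((Finset.univ.filter fun i => θ i ≠ η i).card = N) →
    Monotone θ → Monotone η →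
    (∀ k : ℕ, k ≤ n → psum η k ≤ psum θ k) →
    (∑ i, θ i = ∑ i, η i) →
    ∃ w : Equiv.Perm (Fin n) → ℝ, (∀ σ, 0 ≤ w σ) ∧ (∑ σ, w σ = 1) ∧
      ∀ i, θ i = ∑ σ, w σ * η (σ i) := by
  intro N
  induction N using Nat.strong_induction_on with
  | _ N ih =>
  intro θ η hcard hmθ hmη hps hsum
  by_cases hall : ∀ i, θ i = η i
  · refine ⟨fun σ => if σ = 1 then 1 else 0, fun σ => by positivity, by simp, fun i => ?_⟩
    rw [hall i]
    rw [Finset.sum_eq_single (1 : Equiv.Perm (Fin n))]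
    · simp
    · intro b _ hb; simp [hb]
    · simp
  push_neg at hall
  obtain ⟨i₀, hi₀⟩ := hall
  have hT : (univ.filter fun i : Fin n => θ i < η i).Nonempty := by
    by_contra h
    rw [Finset.not_nonempty_iff_eq_empty, Finset.filter_eq_empty_iff] at h
    have hle : ∀ i ∈ univ, η i ≤ θ i := fun i hi => le_of_not_gt (h hi)
    exact hi₀ ((Finset.sum_eq_sum_iff_of_le hle).mp hsum.symm i₀ (mem_univ _)).symm
  set k := (univ.filter fun i : Fin n => θ i < η i).min' hT with hkdef
  have hkT : θ k < η k := by
    have := Finset.min'_mem _ hT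
    simpa using this
  have hkmin : ∀ i : Fin n, i < k → η i ≤ θ i := by
    intro i hik
    by_contra h
    push_neg at h
    exact absurd (Finset.min'_le _ i (by simp [h])) (not_le.mpr hik)
  have hkn : (k : ℕ) + 1 ≤ n := k.isLt
  have hps1 := hps ((k : ℕ) + 1) hkn
  rw [psum_succ, psum_succ] at hps1
  have hltk : psum η (k : ℕ) < psum θ (k : ℕ) := by linarith
  have hJ : (univ.filter fun i : Fin n => i < k ∧ η i < θ i).Nonempty := by
    by_contra h
    rw [Finset.not_nonempty_iff_eq_empty, Finset.filter_eq_empty_iff] at h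
    have : psum θ (k : ℕ) ≤ psum η (k : ℕ) := by
      apply Finset.sum_le_sum
      intro i hi
      have hik : i < k := by
        have := (mem_filter.mp hi).2
        exact Fin.lt_def.mpr this
      have h2 := h (mem_univ i)
      push_neg at h2
      exact le_of_not_gt (fun hc => absurd (h2 hik) (not_le.mpr hc))
    linarith
  set j := (univ.filter fun i : Fin n => i < k ∧ η i < θ i).max' hJ with hjdef
  have hjmem := Finset.max'_mem (univ.filter fun i : Fin n => i < k ∧ η i < θ i) hJ
  rw [Finset.mem_filter] at hjmem
  obtain ⟨-, hjk, hjlt⟩ := hjmem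
  have heq_mid : ∀ i, j < i → i < k → η i = θ i := by
    intro i hji hik
    refine le_antisymm (hkmin i hik) ?_
    by_contra h
    push_neg at h
    exact absurd (Finset.le_max' _ i (by simp [hik, h])) (not_le.mpr hji)
  set δ := min (θ j - η j) (η k - θ k) with hδdef
  have hδpos : 0 < δ := lt_min (by linarith) (by linarith)
  have hδ1 : δ ≤ θ j - η j := min_le_left _ _
  have hδ2 : δ ≤ η k - θ k := min_le_right _ _
  have hθjk : θ j ≤ θ k := hmθ hjk.le
  have hA1 : η j + δ ≤ θ j := by linarith
  have hA2 : θ k ≤ η k - δ := by linarith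
  have hηjk : η j + δ ≤ η k - δ := by linarith
  have hjne : j ≠ k := ne_of_lt hjk
  set η' : Fin n → ℝ :=
    fun i => η i + (if i = j then δ else 0) - (if i = k then δ else 0) with hη'def
  have hη'j : η' j = η j + δ := by simp [hη'def, hjne]
  have hη'k : η' k = η k - δ := by simp [hη'def, hjne.symm]
  have hη'other : ∀ i, i ≠ j → i ≠ k → η' i = η i := by
    intro i h1 h2; simp [hη'def, h1, h2]
  have hmη' : Monotone η' := by
    intro a b hab
    rcases eq_or_lt_of_le hab with rfl | hab
    · exact le_refl _
    by_cases haj : a = j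
    · subst haj
      by_cases hbk : b = k
      · subst hbk; rw [hη'j, hη'k]; exact hηjk
      · have hbj : b ≠ j := (ne_of_gt hab)
        rw [hη'j, hη'other b hbj hbk]
        rcases lt_trichotomy b k with h | h | h
        · have := heq_mid b hab h
          have h2 := hmθ hab.le
          linarith
        · exact absurd h hbk
        · have h3 := hmη h.le
          linarith
    · by_cases hak : a = k
      · subst hak
        have hbk : b ≠ k := ne_of_gt hab
        have hbj : b ≠ j := by rintro rfl; exact absurd (hjk.trans hab) (lt_irrefl _)
        rw [hη'k, hη'other b hbj hbk]
        have := hmη hab.le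
        linarith
      · rw [hη'other a haj hak]
        by_cases hbj : b = j
        · subst hbj
          rw [hη'j]
          have := hmη hab.le
          linarith
        · by_cases hbk : b = k
          · subst hbk
            rw [hη'k]
            have h1 := hkmin a hab
            have h2 := hmθ hab.le
            linarith
          · rw [hη'other b hbj hbk]; exact hmη hab.le
  have hpsum_η' : ∀ m : ℕ, psum η' m
      = psum η m + (if (j : ℕ) < m then δ else 0) - (if (k : ℕ) < m then δ else 0) := by
    intro m
    simp only [psum, hη'def]
    rw [Finset.sum_sub_distrib, Finset.sum_add_distrib, Finset.sum_ite_eq' , Finset.sum_ite_eq']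
    simp [mem_filter]
  have hps' : ∀ m : ℕ, m ≤ n → psum η' m ≤ psum θ m := by
    intro m hm
    rw [hpsum_η' m]
    by_cases hkm : (k : ℕ) < m
    · have hjm : (j : ℕ) < m := lt_trans (Fin.lt_def.mp hjk) hkm
      simp only [hjm, hkm, if_true]
      linarith [hps m hm]
    · by_cases hjm : (j : ℕ) < m
      · simp only [hjm, hkm, if_true, if_false]
        have hterm : θ j - η j ≤ psum θ m - psum η m := by
          rw [psum, psum, ← Finset.sum_sub_distrib]
          apply Finset.single_le_sum (f := fun i => θ i - η i)
          · intro i hi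
            have h1 : (i : ℕ) < m := (mem_filter.mp hi).2
            have hik : i < k := Fin.lt_def.mpr (lt_of_lt_of_le h1 (not_lt.mp hkm))
            linarith [hkmin i hik]
          · simp [hjm]
        linarith
      · simp only [hjm, hkm, if_false]
        linarith [hps m hm]
  have hsum' : ∑ i, θ i = ∑ i, η' i := by
    have h1 : ∑ i, η' i = ∑ i, η i := by
      simp only [hη'def]
      rw [Finset.sum_sub_distrib, Finset.sum_add_distrib, Finset.sum_ite_eq',
        Finset.sum_ite_eq']
      simp
    rw [h1]; exact hsum
  have hsub : (univ.filter fun i => θ i ≠ η' i) ⊆ (univ.filter fun i => θ i ≠ η i) := by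
    intro i hi
    simp only [mem_filter, mem_univ, true_and] at hi ⊢
    by_cases h1 : i = j
    · subst h1; exact (ne_of_gt hjlt)
    by_cases h2 : i = k
    · subst h2; exact (ne_of_lt hkT)
    rw [hη'other i h1 h2] at hi
    exact hi
  have hcard' : (univ.filter fun i => θ i ≠ η' i).card < N := by
    rw [← hcard]
    apply Finset.card_lt_card
    constructor
    · exact hsub
    · intro hsup
      rcases le_total (θ j - η j) (η k - θ k) with hc | hc
      · have hδeq : δ = θ j - η j := min_eq_left hc
        have hmem : j ∈ (univ.filter fun i => θ i ≠ η i) := by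
          simp only [mem_filter, mem_univ, true_and]; exact hjlt.ne'
        have := hsup hmem
        simp only [mem_filter, mem_univ, true_and] at this
        exact this (by rw [hη'j, hδeq]; ring)
      · have hδeq : δ = η k - θ k := min_eq_right hc
        have hmem : k ∈ (univ.filter fun i => θ i ≠ η i) := by simp [ne_of_lt hkT]
        have := hsup hmem
        simp only [mem_filter, mem_univ, true_and] at this
        exact this (by rw [hη'k, hδeq]; ring)
  obtain ⟨w', hw'0, hw'1, hw'θ⟩ :=
    ih _ hcard' θ η' rfl hmθ hmη' hps' hsum'
  set τ := Equiv.swap j k with hτdef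
  have hηkj : η j < η k := by linarith
  have hden : 0 < η k - η j := by linarith
  set lam := 1 - δ / (η k - η j) with hlamdef
  have h1lam : 1 - lam = δ / (η k - η j) := by rw [hlamdef]; ring
  have hδle : δ ≤ η k - η j := by linarith
  have hlam0 : 0 ≤ lam := by
    rw [hlamdef]
    have : δ / (η k - η j) ≤ 1 := (div_le_one hden).mpr hδle
    linarith
  have hlam1 : lam ≤ 1 := by
    rw [hlamdef]
    have : 0 ≤ δ / (η k - η j) := div_nonneg hδpos.le hden.le
    linarith
  have hcomb : ∀ i, η' i = lam * η i + (1 - lam) * η (τ i) := by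
    intro i
    rw [h1lam]
    by_cases h1 : i = j
    · subst h1
      rw [hη'j, hτdef, Equiv.swap_apply_left, hlamdef]
      field_simp
      ring
    · by_cases h2 : i = k
      · subst h2
        rw [hη'k, hτdef, Equiv.swap_apply_right, hlamdef]
        field_simp
        ring
      · rw [hη'other i h1 h2, hτdef, Equiv.swap_apply_of_ne_of_ne h1 h2, hlamdef]
        field_simp
        ring
  have hττ : ∀ ρ : Equiv.Perm (Fin n), τ * (τ * ρ) = ρ := by
    intro ρ
    rw [← mul_assoc, hτdef, Equiv.swap_mul_self, one_mul]
  refine ⟨fun ρ => lam * w' ρ + (1 - lam) * w' (τ * ρ), ?_, ?_, ?_⟩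
  · intro ρ
    show 0 ≤ lam * w' ρ + (1 - lam) * w' (τ * ρ)
    have h1 := hw'0 ρ
    have h2 := hw'0 (τ * ρ)
    nlinarith
  · rw [Finset.sum_add_distrib, ← Finset.mul_sum, ← Finset.mul_sum]
    have hre : ∑ ρ : Equiv.Perm (Fin n), w' (τ * ρ) = ∑ ρ : Equiv.Perm (Fin n), w' ρ :=
      Fintype.sum_equiv (Equiv.mulLeft τ) _ _ (fun ρ => rfl)
    rw [hre, hw'1]
    ring
  · intro i
    rw [hw'θ i]
    have hstep : ∀ σ : Equiv.Perm (Fin n),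
        w' σ * η' (σ i)
          = lam * (w' σ * η (σ i)) + (1 - lam) * (w' σ * η ((τ * σ) i)) := by
      intro σ
      rw [hcomb (σ i)]
      have : τ (σ i) = (τ * σ) i := rfl
      rw [this]
      ring
    calc ∑ σ : Equiv.Perm (Fin n), w' σ * η' (σ i)
        = ∑ σ : Equiv.Perm (Fin n),
            (lam * (w' σ * η (σ i)) + (1 - lam) * (w' σ * η ((τ * σ) i))) := by
          exact Finset.sum_congr rfl (fun σ _ => hstep σ)
      _ = lam * ∑ σ : Equiv.Perm (Fin n), w' σ * η (σ i)
            + (1 - lam) * ∑ σ : Equiv.Perm (Fin n), w' σ * η ((τ * σ) i) := by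
          rw [Finset.sum_add_distrib, ← Finset.mul_sum, ← Finset.mul_sum]
      _ = lam * ∑ σ : Equiv.Perm (Fin n), w' σ * η (σ i)
            + (1 - lam) * ∑ ρ : Equiv.Perm (Fin n), w' (τ * ρ) * η (ρ i) := by
          congr 1
          congr 1
          refine Fintype.sum_equiv (Equiv.mulLeft τ) _ _ (fun σ => ?_)
          simp only [Equiv.coe_mulLeft]
          rw [hττ σ]
      _ = ∑ ρ : Equiv.Perm (Fin n),
            (lam * w' ρ + (1 - lam) * w' (τ * ρ)) * η (ρ i) := by
          simp only [add_mul]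
          rw [Finset.sum_add_distrib, Finset.mul_sum, Finset.mul_sum]
          congr 1
          · exact Finset.sum_congr rfl (fun ρ _ => by ring)
          · exact Finset.sum_congr rfl (fun ρ _ => by ring)


lemma hlp {θ η : Fin n → ℝ} (hmaj : MajorizedBy θ η) :
    ∃ w : Equiv.Perm (Fin n) → ℝ, (∀ σ, 0 ≤ w σ) ∧ (∑ σ, w σ = 1) ∧
      ∀ i, θ i = ∑ σ, w σ * η (σ i) := by
  obtain ⟨hsum, hps⟩ := hmaj
  have hmθ : Monotone (θ ∘ Tuple.sort θ) := Tuple.monotone_sort θ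
  have hmη : Monotone (η ∘ Tuple.sort η) := Tuple.monotone_sort η
  have hsum' : ∑ i, (θ ∘ Tuple.sort θ) i = ∑ i, (η ∘ Tuple.sort η) i := by
    simp only [Function.comp_apply]
    rw [Equiv.sum_comp (Tuple.sort θ) θ, Equiv.sum_comp (Tuple.sort η) η]
    exact hsum
  have hps' : ∀ k : ℕ, k ≤ n →
      psum (η ∘ Tuple.sort η) k ≤ psum (θ ∘ Tuple.sort θ) k := hps
  obtain ⟨w, hw0, hw1, hwθ⟩ :=
    hlp_sorted _ (θ ∘ Tuple.sort θ) (η ∘ Tuple.sort η) rfl hmθ hmη hps' hsum'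
  set sθ := Tuple.sort θ
  set sη := Tuple.sort η
  set e : Equiv.Perm (Fin n) ≃ Equiv.Perm (Fin n) :=
    (Equiv.mulLeft sη).trans (Equiv.mulRight sθ⁻¹) with hedef
  have hee : ∀ σ : Equiv.Perm (Fin n), e σ = sη * σ * sθ⁻¹ := fun σ => rfl
  refine ⟨fun ρ => w (sη⁻¹ * ρ * sθ), fun ρ => hw0 _, ?_, ?_⟩
  · rw [← hw1]
    refine (Fintype.sum_equiv e _ _ (fun σ => ?_)).symm
    rw [hee]
    congr 1
    group
  · intro i
    have h1 : θ i = (θ ∘ sθ) (sθ⁻¹ i) := by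
      simp [Function.comp_apply]
    rw [h1, hwθ (sθ⁻¹ i)]
    refine Fintype.sum_equiv e _ _ (fun σ => ?_)
    show w σ * (η ∘ sη) (σ (sθ⁻¹ i))
        = w (sη⁻¹ * (sη * σ * sθ⁻¹) * sθ) * η ((sη * σ * sθ⁻¹) i)
    have hgrp : sη⁻¹ * (sη * σ * sθ⁻¹) * sθ = σ := by group
    rw [hgrp]
    simp [Function.comp_apply, Equiv.Perm.mul_apply]


end HLPAux

namespace ProbAux


lemma pareto_survival {P : Measure Ω} [IsProbabilityMeasure P] {α : ℝ} {X : Ω → ℝ}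
    (h : IsPareto P α X) (x : ℝ) :
    P {ω | x < X ω} = (if 1 ≤ x then ENNReal.ofReal (x ^ (-α)) else 1) := by
  by_cases hx : 1 ≤ x
  · simp only [hx, if_true]
    exact h.2.1 x hx
  · simp only [hx, if_false]
    push_neg at hx
    have hms : MeasurableSet {ω | x < X ω} := h.1 measurableSet_Ioi
    have hsub : {ω | x < X ω}ᶜ ⊆ {ω | X ω < 1} := by
      intro ω hω
      simp only [Set.mem_compl_iff, Set.mem_setOf_eq, not_lt] at hω
      exact lt_of_le_of_lt hω hx
    have h0 : P {ω | x < X ω}ᶜ = 0 := measure_mono_null hsub h.2.2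
    rwa [prob_compl_eq_zero_iff hms] at h0

lemma pareto_map_eq {P : Measure Ω} [IsProbabilityMeasure P] {α : ℝ} {X Y : Ω → ℝ}
    (hX : IsPareto P α X) (hY : IsPareto P α Y) :
    Measure.map X P = Measure.map Y P := by
  haveI : IsProbabilityMeasure (Measure.map X P) :=
    Measure.isProbabilityMeasure_map hX.1.aemeasurable
  apply MeasureTheory.Measure.ext_of_Iic
  intro a
  rw [Measure.map_apply hX.1 measurableSet_Iic, Measure.map_apply hY.1 measurableSet_Iic]
  have h1 : X ⁻¹' Set.Iic a = {ω | a < X ω}ᶜ := by ext ω; simp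
  have h2 : Y ⁻¹' Set.Iic a = {ω | a < Y ω}ᶜ := by ext ω; simp
  rw [h1, h2,
    measure_compl (show MeasurableSet {ω | a < X ω} from hX.1 measurableSet_Ioi)
      (measure_ne_top _ _),
    measure_compl (show MeasurableSet {ω | a < Y ω} from hY.1 measurableSet_Ioi)
      (measure_ne_top _ _),
    pareto_survival hX, pareto_survival hY]

lemma joint_law {n : ℕ} {P : Measure Ω} [IsProbabilityMeasure P] {X : Fin n → Ω → ℝ}
    (hmeas : ∀ i, Measurable (X i))
    (hind : iIndepFun X P) :
    Measure.map (fun ω i => X i ω) P = Measure.pi (fun i => Measure.map (X i) P) := by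
  haveI : ∀ i, IsProbabilityMeasure (Measure.map (X i) P) :=
    fun i => Measure.isProbabilityMeasure_map (hmeas i).aemeasurable
  refine (Measure.pi_eq fun s hs => ?_).symm
  rw [Measure.map_apply (measurable_pi_lambda _ hmeas) (MeasurableSet.univ_pi hs)]
  have hpre : (fun ω i => X i ω) ⁻¹' (Set.univ.pi s) = ⋂ i, X i ⁻¹' s i := by
    ext ω; simp [Set.mem_pi]
  rw [hpre, hind.meas_iInter (fun i => ⟨s i, hs i, rfl⟩)]
  exact Finset.prod_congr rfl fun i _ => (Measure.map_apply (hmeas i) (hs i)).symm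

lemma sum_perm_identDistrib {n : ℕ} {P : Measure Ω} [IsProbabilityMeasure P]
    {X : Fin n → Ω → ℝ} (hmeas : ∀ i, Measurable (X i))
    (hjoint : Measure.map (fun ω i => X i ω) P = Measure.pi (fun i => Measure.map (X i) P))
    (hmarg : ∀ i j, Measure.map (X i) P = Measure.map (X j) P)
    (η : Fin n → ℝ) (σ : Equiv.Perm (Fin n)) :
    IdentDistrib (fun ω => ∑ i, η (σ i) * X i ω) (fun ω => ∑ i, η i * X i ω) P P := by
  set μ : Fin n → Measure ℝ := fun i => Measure.map (X i) P with hμ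
  haveI : ∀ i, IsProbabilityMeasure (μ i) :=
    fun i => Measure.isProbabilityMeasure_map (hmeas i).aemeasurable
  set T : Ω → (Fin n → ℝ) := fun ω i => X i ω with hT
  have hTmeas : Measurable T := measurable_pi_lambda _ hmeas
  set g : (Fin n → ℝ) → ℝ := fun x => ∑ i, η i * x i with hg
  have hgmeas : Measurable g := by
    apply Finset.measurable_sum
    intro i _
    exact (measurable_pi_apply i).const_mul _
  set C := MeasurableEquiv.piCongrLeft (fun _ : Fin n => ℝ) σ with hC
  have hCapp : ∀ (x : Fin n → ℝ) (i : Fin n), C x (σ i) = x i := by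
    intro x i
    rw [hC, MeasurableEquiv.coe_piCongrLeft]
    exact Equiv.piCongrLeft_apply_apply (fun _ : Fin n => ℝ) σ x i
  have hfun : (fun ω => ∑ i, η (σ i) * X i ω) = g ∘ ⇑C ∘ T := by
    funext ω
    simp only [Function.comp_apply, hg]
    rw [← Equiv.sum_comp σ (fun i => η i * C (T ω) i)]
    refine Finset.sum_congr rfl fun i _ => ?_
    rw [hCapp]
  have hmeas1 : Measurable (fun ω => ∑ i, η (σ i) * X i ω) := by
    apply Finset.measurable_sum
    intro i _
    exact (hmeas i).const_mul _
  have hmeas2 : Measurable (fun ω => ∑ i, η i * X i ω) := by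
    apply Finset.measurable_sum
    intro i _
    exact (hmeas i).const_mul _
  refine ⟨hmeas1.aemeasurable, hmeas2.aemeasurable, ?_⟩
  have hmap1 : Measure.map (fun ω => ∑ i, η (σ i) * X i ω) P
      = Measure.map g (Measure.pi μ) := by
    rw [hfun]
    have hcomp : g ∘ ⇑C ∘ T = (g ∘ ⇑C) ∘ T := rfl
    rw [hcomp, ← Measure.map_map (hgmeas.comp C.measurable) hTmeas, hjoint,
      ← Measure.map_map hgmeas C.measurable]
    congr 1
    have h2 : Measure.pi μ = Measure.pi (fun i => μ (σ i)) := by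
      congr 1
      funext i
      exact hmarg _ _
    conv_lhs => rw [h2]
    exact (measurePreserving_piCongrLeft μ σ).map_eq
  have hmap2 : Measure.map (fun ω => ∑ i, η i * X i ω) P
      = Measure.map g (Measure.pi μ) := by
    have hcomp : (fun ω => ∑ i, η i * X i ω) = g ∘ T := rfl
    rw [hcomp, ← Measure.map_map hgmeas hTmeas, hjoint]
  rw [hmap1, hmap2]


end ProbAux

theorem stmt_7 (P : Measure Ω) [IsProbabilityMeasure P] (n : ℕ)
    (α : ℝ) (hα : 1 < α)
    (X : Fin n → Ω → ℝ) (hX : ∀ i, IsPareto P α (X i))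
    (hind : iIndepFun X P)
    (θ η : Fin n → ℝ) (hθ : ∀ i, 0 ≤ θ i) (hη : ∀ i, 0 ≤ η i)
    (hmaj : MajorizedBy θ η) :
    ∀ u : ℝ → ℝ, Monotone u → ConcaveOn ℝ Set.univ u →
      Integrable (fun ω => u (∑ i, η i * X i ω)) P →
      Integrable (fun ω => u (∑ i, θ i * X i ω)) P →
      ∫ ω, u (∑ i, η i * X i ω) ∂P ≤ ∫ ω, u (∑ i, θ i * X i ω) ∂P := by
  intro u humono huconc hintη hintθ
  obtain ⟨w, hw0, hw1, hwθ⟩ := HLPAux.hlp (θ := θ) (η := η) hmaj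
  have hmeas : ∀ i, Measurable (X i) := fun i => (hX i).1
  have hjoint := ProbAux.joint_law hmeas hind
  have hmarg : ∀ i j, Measure.map (X i) P = Measure.map (X j) P :=
    fun i j => ProbAux.pareto_map_eq (hX i) (hX j)
  have hid : ∀ σ : Equiv.Perm (Fin n),
      IdentDistrib (fun ω => ∑ i, η (σ i) * X i ω) (fun ω => ∑ i, η i * X i ω) P P :=
    fun σ => ProbAux.sum_perm_identDistrib hmeas hjoint hmarg η σ
  have humeas : Measurable u := humono.measurable
  have hidu : ∀ σ : Equiv.Perm (Fin n),
      IdentDistrib (fun ω => u (∑ i, η (σ i) * X i ω))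
        (fun ω => u (∑ i, η i * X i ω)) P P := fun σ => (hid σ).comp humeas
  have hintσ : ∀ σ : Equiv.Perm (Fin n),
      Integrable (fun ω => u (∑ i, η (σ i) * X i ω)) P :=
    fun σ => ((hidu σ).integrable_iff).mpr hintη
  have hintegσ : ∀ σ : Equiv.Perm (Fin n),
      ∫ ω, u (∑ i, η (σ i) * X i ω) ∂P = ∫ ω, u (∑ i, η i * X i ω) ∂P :=
    fun σ => (hidu σ).integral_eq
  have hθsum : ∀ ω, ∑ i, θ i * X i ω
      = ∑ σ : Equiv.Perm (Fin n), w σ * ∑ i, η (σ i) * X i ω := by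
    intro ω
    calc ∑ i, θ i * X i ω = ∑ i, (∑ σ : Equiv.Perm (Fin n), w σ * η (σ i)) * X i ω :=
          Finset.sum_congr rfl fun i _ => by rw [← hwθ i]
      _ = ∑ i, ∑ σ : Equiv.Perm (Fin n), w σ * η (σ i) * X i ω :=
          Finset.sum_congr rfl fun i _ => by rw [Finset.sum_mul]
      _ = ∑ σ : Equiv.Perm (Fin n), ∑ i, w σ * η (σ i) * X i ω := Finset.sum_comm
      _ = ∑ σ : Equiv.Perm (Fin n), w σ * ∑ i, η (σ i) * X i ω := by
          refine Finset.sum_congr rfl fun σ _ => ?_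
          rw [Finset.mul_sum]
          exact Finset.sum_congr rfl fun i _ => by ring
  have hpt : ∀ ω, ∑ σ : Equiv.Perm (Fin n), w σ * u (∑ i, η (σ i) * X i ω)
      ≤ u (∑ i, θ i * X i ω) := by
    intro ω
    rw [hθsum ω]
    have := huconc.le_map_sum (t := (Finset.univ : Finset (Equiv.Perm (Fin n)))) (w := w)
      (p := fun σ => ∑ i, η (σ i) * X i ω) (fun σ _ => hw0 σ) hw1
      (fun σ _ => Set.mem_univ _)
    simpa [smul_eq_mul] using this
  have hG : Integrable
      (fun ω => ∑ σ : Equiv.Perm (Fin n), w σ * u (∑ i, η (σ i) * X i ω)) P :=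
    integrable_finset_sum _ (fun σ _ => (hintσ σ).const_mul _)
  have hle := integral_mono hG hintθ hpt
  have hGval : ∫ ω, (∑ σ : Equiv.Perm (Fin n), w σ * u (∑ i, η (σ i) * X i ω)) ∂P
      = ∫ ω, u (∑ i, η i * X i ω) ∂P := by
    rw [integral_finset_sum _ (fun σ _ => (hintσ σ).const_mul _)]
    calc ∑ σ : Equiv.Perm (Fin n), ∫ ω, w σ * u (∑ i, η (σ i) * X i ω) ∂P
        = ∑ σ : Equiv.Perm (Fin n), w σ * ∫ ω, u (∑ i, η i * X i ω) ∂P := by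
          refine Finset.sum_congr rfl fun σ _ => ?_
          rw [MeasureTheory.integral_const_mul, hintegσ σ]
      _ = ∫ ω, u (∑ i, η i * X i ω) ∂P := by
          rw [← Finset.sum_mul, hw1, one_mul]
  rw [← hGval]
  exact hle
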